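/- Let w > 0 and let f : ℝ → ℝ be continuously differentiable on [0, w]. For τ > 0, define β(y) = f(y) + f'(y)/τ. Then ∫₀^w τ·e^{-τx}·β(w - x) dx + e^{-τw}·f(0) = f(w). In particular if f(0) = 0, the expected estimate ∫₀^w τ e^{-τx} β(w-x) dx equals f(w). -/

import Mathlib

open Real MeasureTheory intervalIntegral

/-- Unbiasedness of the continuous Sample-and-Hold estimator in the regime `τℓ > 1`:
for a key of weight `w`, the counted value is `w - x` with density `τ e^{-τ x}` on `(0, w)`,
and with probability `e^{-τ w}` the count is `0` (contributing `f 0`). -/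
theorem stmt_0 (w τ : ℝ) (hw : 0 < w) (hτ : 0 < τ) (f f' : ℝ → ℝ)
    (hderiv : ∀ x ∈ Set.Icc (0:ℝ) w, HasDerivAt f (f' x) x)
    (hcont : ContinuousOn f' (Set.Icc (0:ℝ) w)) :
    (∫ x in (0:ℝ)..w, τ * Real.exp (-τ * x) * (f (w - x) + f' (w - x) / τ))
      + Real.exp (-τ * w) * f 0 = f w := by
  set g : ℝ → ℝ := fun x => -(Real.exp (-τ * x) * f (w - x)) with hg
  have hgderiv : ∀ x ∈ Set.Icc (0:ℝ) w,
      HasDerivAt g (τ * Real.exp (-τ * x) * (f (w - x) + f' (w - x) / τ)) x := by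
    intro x hx
    have hmem : w - x ∈ Set.Icc (0:ℝ) w := by
      constructor <;> [linarith [hx.2]; linarith [hx.1]]
    have h1 : HasDerivAt (fun y : ℝ => Real.exp (-τ * y)) (-τ * Real.exp (-τ * x)) x := by
      have h0 : HasDerivAt (fun y : ℝ => -τ * y) (-τ) x := by
        simpa using (hasDerivAt_id x).const_mul (-τ)
      have h := h0.exp
      simpa [mul_comm] using h
    have h2 : HasDerivAt (fun y : ℝ => f (w - y)) (-f' (w - x)) x := by
      have := (hderiv _ hmem).comp x ((hasDerivAt_const x w).sub (hasDerivAt_id x))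
      exact this.congr_deriv (by ring)
    have := (h1.mul h2).neg
    convert this using 1
    rfl
    rfl
    rfl
    field_simp
    ring
  have hfc : ContinuousOn f (Set.Icc (0:ℝ) w) := fun x hx =>
    (hderiv x hx).continuousAt.continuousWithinAt
  have hci : ContinuousOn (fun x => τ * Real.exp (-τ * x) * (f (w - x) + f' (w - x) / τ))
      (Set.Icc (0:ℝ) w) := by
    have hsub : ContinuousOn (fun x : ℝ => w - x) (Set.Icc (0:ℝ) w) :=
      (continuous_const.sub continuous_id).continuousOn
    have hmaps : Set.MapsTo (fun x : ℝ => w - x) (Set.Icc (0:ℝ) w) (Set.Icc (0:ℝ) w) := by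
      intro x hx
      obtain ⟨h1, h2⟩ := hx
      exact ⟨by simp; linarith, by simp; linarith⟩
    exact (continuous_const.mul (Real.continuous_exp.comp (continuous_const.mul
      continuous_id))).continuousOn.mul
      (((hfc.comp hsub hmaps).add ((hcont.comp hsub hmaps).div_const τ)))
  have key := intervalIntegral.integral_eq_sub_of_hasDerivAt
    (fun x hx => hgderiv x (by rwa [Set.uIcc_of_le hw.le] at hx))
    (hci.intervalIntegrable_of_Icc hw.le)
  rw [key]
  simp [hg]
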